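/- Let a_1, …, a_{n+1} be real numbers and let ε > 0. Among the (n+1)! permutations σ of {1, …, n+1}, the fraction for which the last-placed value a_{σ(n+1)} fails to lie in the upper (1−ε)-fraction of the multiset (i.e., for which |{i : a_i ≤ a_{σ(n+1)}}| ≤ ε(n+1)) is at most ε. -/

import Mathlib

open Finset

-- fiber count: permutations sending `last` to `j`
lemma fiber_card {n : ℕ} (j : Fin (n + 1)) :
    (univ.filter fun σ : Equiv.Perm (Fin (n + 1)) => σ (Fin.last n) = j).card
      = n.factorial := by
  classical
  have e1 : {σ : Equiv.Perm (Fin (n + 1)) // σ (Fin.last n) = j}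
      ≃ {τ : Equiv.Perm (Fin (n + 1)) // τ 0 = j} :=
    { toFun := fun σ => ⟨(Equiv.swap 0 (Fin.last n)).trans σ.1, by simp [σ.2]⟩
      invFun := fun τ => ⟨(Equiv.swap 0 (Fin.last n)).trans τ.1, by simp [τ.2]⟩
      left_inv := fun σ => by
        ext x; simp
      right_inv := fun τ => by
        ext x; simp }
  have e2 : {τ : Equiv.Perm (Fin (n + 1)) // τ 0 = j}
      ≃ {p : Fin (n + 1) × Equiv.Perm (Fin n) // p.1 = j} :=
    Equiv.subtypeEquiv Equiv.Perm.decomposeFin (by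
      intro τ
      constructor
      · intro h
        have := Equiv.Perm.decomposeFin_symm_apply_zero
          (Equiv.Perm.decomposeFin τ).1 (Equiv.Perm.decomposeFin τ).2
        rw [Prod.mk.eta, Equiv.symm_apply_apply] at this
        rw [← this, h]
      · intro h
        have := Equiv.Perm.decomposeFin_symm_apply_zero
          (Equiv.Perm.decomposeFin τ).1 (Equiv.Perm.decomposeFin τ).2
        rw [Prod.mk.eta, Equiv.symm_apply_apply] at this
        rw [this, h])
  have e3 : {p : Fin (n + 1) × Equiv.Perm (Fin n) // p.1 = j} ≃ Equiv.Perm (Fin n) :=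
    { toFun := fun p => p.1.2
      invFun := fun e => ⟨(j, e), rfl⟩
      left_inv := fun p => by
        rcases p with ⟨⟨x, e⟩, h⟩; simp at h; subst h; rfl
      right_inv := fun e => rfl }
  have := Fintype.card_congr ((e1.trans e2).trans e3)
  simpa [Fintype.card_subtype, Fintype.card_perm, Fintype.card_fin] using this

theorem permutation_counting_conformal {n : ℕ} (a : Fin (n + 1) → ℝ) (ε : ℝ) (hε : 0 < ε) :
    ((univ.filter fun σ : Equiv.Perm (Fin (n + 1)) =>
        ((univ.filter fun i : Fin (n + 1) => a i ≤ a (σ (Fin.last n))).card : ℝ)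
          ≤ ε * (n + 1)).card : ℝ) / (Nat.factorial (n + 1)) ≤ ε := by
  classical
  set T : Finset (Fin (n + 1)) :=
    univ.filter (fun j => ((univ.filter fun i : Fin (n + 1) => a i ≤ a j).card : ℝ)
      ≤ ε * (n + 1)) with hT
  -- |T| ≤ ε (n+1)
  have hTcard : (T.card : ℝ) ≤ ε * (n + 1) := by
    rcases T.eq_empty_or_nonempty with h | h
    · simp [h]
      positivity
    · obtain ⟨j, hjT, hjmax⟩ := T.exists_max_image a h
      have hsub : T ⊆ univ.filter fun i : Fin (n + 1) => a i ≤ a j := by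
        intro i hi
        simp only [mem_filter, mem_univ, true_and]
        exact hjmax i hi
      have h1 : (T.card : ℝ) ≤ ((univ.filter fun i : Fin (n + 1) => a i ≤ a j).card : ℝ) := by
        exact_mod_cast card_le_card hsub
      have h2 := (mem_filter.mp hjT).2
      linarith
  -- count permutations fiberwise
  have hcount : (univ.filter fun σ : Equiv.Perm (Fin (n + 1)) =>
        ((univ.filter fun i : Fin (n + 1) => a i ≤ a (σ (Fin.last n))).card : ℝ)
          ≤ ε * (n + 1)).card = T.card * n.factorial := by
    rw [card_eq_sum_card_fiberwise (f := fun σ : Equiv.Perm (Fin (n + 1)) => σ (Fin.last n))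
      (t := T) (by intro σ hσ; simp only [hT, mem_coe, mem_filter, mem_univ, true_and] at *; exact hσ)]
    have : ∀ j ∈ T, ((univ.filter fun σ : Equiv.Perm (Fin (n + 1)) =>
        ((univ.filter fun i : Fin (n + 1) => a i ≤ a (σ (Fin.last n))).card : ℝ)
          ≤ ε * (n + 1)).filter fun σ => σ (Fin.last n) = j).card = n.factorial := by
      intro j hj
      rw [filter_filter]
      have heq : (univ.filter fun σ : Equiv.Perm (Fin (n + 1)) =>
          (((univ.filter fun i : Fin (n + 1) => a i ≤ a (σ (Fin.last n))).card : ℝ)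
            ≤ ε * (n + 1)) ∧ σ (Fin.last n) = j)
          = univ.filter fun σ : Equiv.Perm (Fin (n + 1)) => σ (Fin.last n) = j := by
        apply filter_congr
        intro σ _
        constructor
        · exact fun h => h.2
        · intro h
          refine ⟨?_, h⟩
          rw [h]
          exact (mem_filter.mp hj).2
      rw [heq, fiber_card]
    rw [sum_congr rfl this, sum_const, smul_eq_mul]
  rw [hcount]
  have hfact : ((n + 1).factorial : ℝ) = (n + 1) * n.factorial := by
    rw [Nat.factorial_succ]; push_cast; ring
  have hnf : (0 : ℝ) < n.factorial := by positivity
  have hn1 : (0 : ℝ) < (n : ℝ) + 1 := by positivity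
  rw [div_le_iff₀ (by rw [hfact]; positivity)]
  push_cast
  rw [hfact]
  nlinarith [hTcard, hnf]
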